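/- Let R be a nonzero commutative ring and A a nontrivial finite commutative group. Then the nilpotency index of the augmentation ideal of R[A] is at least max(exp(A), rank(A)), where rank(A) is the least number of cyclic groups whose direct sum is isomorphic to A. In particular, if a ∈ A has order n then ([a]−[0])^{n−1} ≠ 0 in R[A]. -/

import Mathlib

/-- The augmentation map of the group ring `R[A]`. -/
noncomputable def aug (R : Type*) [CommRing R] (A : Type*) [AddCommGroup A] :
    AddMonoidAlgebra R A →ₐ[R] R :=
  (AddMonoidAlgebra.lift R R A) 1

/-- The augmentation ideal of `R[A]`. -/
noncomputable def augIdeal (R : Type*) [CommRing R] (A : Type*) [AddCommGroup A] :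
    Ideal (AddMonoidAlgebra R A) :=
  RingHom.ker (aug R A).toRingHom

/-- The rank of a commutative group: the least `r` such that `A` is isomorphic to a
direct sum of `r` cyclic groups. -/
noncomputable def addRank (A : Type*) [AddCommGroup A] : ℕ :=
  sInf {r : ℕ | ∃ n : Fin r → ℕ, Nonempty (A ≃+ ∀ i, ZMod (n i))}

section Aux

variable {R : Type*} [CommRing R] {A : Type*} [AddCommGroup A]

lemma aug_single (a : A) (r : R) : aug R A (AddMonoidAlgebra.single a r) = r := by
  simp [aug, AddMonoidAlgebra.lift_single]

lemma sub_one_mem_augIdeal (a : A) :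
    AddMonoidAlgebra.single a (1 : R) - 1 ∈ augIdeal R A := by
  have h1 : (1 : AddMonoidAlgebra R A) = AddMonoidAlgebra.single (0 : A) 1 :=
    AddMonoidAlgebra.one_def
  simp only [augIdeal, RingHom.mem_ker, AlgHom.toRingHom_eq_coe, RingHom.coe_coe, map_sub,
    aug_single, h1, sub_self]

/-- Key computation: the coefficient at `0` of `∏ i, ([a i] - [0])`. -/
lemma coeff_prod {ι : Type*} [Fintype ι] (a : ι → A)
    (h : ∀ t : Finset ι, t.Nonempty → ∑ i ∈ t, a i ≠ 0) :
    (∏ i : ι, (AddMonoidAlgebra.single (a i) (1 : R) - 1)).coeff 0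
      = (-1 : R) ^ Fintype.card ι := by
  classical
  have hne : ∀ i : ι, AddMonoidAlgebra.single (a i) (1 : R) - 1
      = AddMonoidAlgebra.single (a i) (1 : R) + (-1) := by intro i; ring
  have hneg : ∀ k : ℕ, (-1 : AddMonoidAlgebra R A) ^ k
      = AddMonoidAlgebra.single (0 : A) ((-1 : R) ^ k) := by
    intro k
    have hmap : ∀ r : R, AddMonoidAlgebra.single (0 : A) r
        = (AddMonoidAlgebra.singleZeroRingHom : R →+* AddMonoidAlgebra R A) r := fun _ => rfl
    rw [hmap, map_pow, map_neg, map_one]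
  simp only [hne]
  rw [Finset.prod_add]
  have hterm : ∀ t : Finset ι,
      (∏ i ∈ t, AddMonoidAlgebra.single (a i) (1 : R)) *
        ∏ _i ∈ Finset.univ \ t, (-1 : AddMonoidAlgebra R A)
      = AddMonoidAlgebra.single (∑ i ∈ t, a i)
          ((-1 : R) ^ (Finset.univ \ t).card) := by
    intro t
    rw [AddMonoidAlgebra.prod_single, Finset.prod_const, Finset.prod_const, one_pow,
      hneg, AddMonoidAlgebra.single_mul_single, add_zero, one_mul]
  simp only [hterm]
  rw [AddMonoidAlgebra.coeff_sum, Finset.sum_apply']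
  rw [Finset.sum_eq_single_of_mem (∅ : Finset ι)
    (Finset.mem_powerset.mpr (Finset.empty_subset _))]
  · simp [AddMonoidAlgebra.coeff_single, Finsupp.single_apply]
  · intro t _ hne'
    have hts : (∑ i ∈ t, a i) ≠ 0 := by
      apply h
      exact Finset.nonempty_iff_ne_empty.mpr hne'
    rw [AddMonoidAlgebra.coeff_single, Finsupp.single_apply, if_neg hts]

/-- `([a]-[0])^(ord a - 1)` is nonzero. -/
lemma pow_sub_one_ne_zero [Nontrivial R] [Fintype A] (a : A) :
    (AddMonoidAlgebra.single a (1 : R) - 1) ^ (addOrderOf a - 1) ≠ 0 := by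
  classical
  set m := addOrderOf a with hm
  have hmpos : 0 < m := addOrderOf_pos a
  have hpow : (AddMonoidAlgebra.single a (1 : R) - 1) ^ (m - 1)
      = ∏ _i : Fin (m - 1), (AddMonoidAlgebra.single a (1 : R) - 1) := by
    rw [Finset.prod_const, Finset.card_univ, Fintype.card_fin]
  intro hzero
  have hcoeff : (∏ _i : Fin (m - 1), (AddMonoidAlgebra.single a (1 : R) - 1)).coeff 0
      = (-1 : R) ^ Fintype.card (Fin (m - 1)) := by
    apply coeff_prod
    intro t ht
    rw [Finset.sum_const]
    intro hc
    have hdvd : m ∣ t.card := addOrderOf_dvd_of_nsmul_eq_zero hc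
    have hpos : 0 < t.card := Finset.card_pos.mpr ht
    have hle : t.card ≤ m - 1 := by
      calc t.card ≤ Finset.univ.card := Finset.card_le_card (Finset.subset_univ t)
        _ = m - 1 := by simp
    have := Nat.le_of_dvd hpos hdvd
    omega
  rw [hpow] at hzero
  rw [hzero] at hcoeff
  simp only [AddMonoidAlgebra.coeff_zero, Finsupp.coe_zero, Pi.zero_apply] at hcoeff
  exact IsUnit.ne_zero (isUnit_one.neg.pow _) hcoeff.symm

/-- Dropping a trivial factor from a product of cyclic groups. -/
lemma dropTriv {k : ℕ} (n : Fin (k + 1) → ℕ) (j : Fin (k + 1)) (hj : n j = 1) :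
    Nonempty ((∀ i, ZMod (n i)) ≃+ ∀ i : Fin k, ZMod (n (j.succAbove i))) := by
  haveI hs : Subsingleton (ZMod (n j)) := by rw [hj]; infer_instance
  refine ⟨AddEquiv.mk'
    ⟨fun f i => f (j.succAbove i), fun g => j.insertNth 0 g, ?_, ?_⟩ (fun x y => rfl)⟩
  · intro f; funext i
    by_cases h : i = j
    · subst h; exact Subsingleton.elim _ _
    · obtain ⟨i', rfl⟩ := Fin.exists_succAbove_eq h
      exact Fin.insertNth_apply_succAbove (α := fun i => ZMod (n i)) j 0 _ i'
  · intro g; funext i; exact Fin.insertNth_apply_succAbove (α := fun i => ZMod (n i)) j 0 g i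

lemma shrink {r : ℕ} (n : Fin r → ℕ) (j : Fin r) (hj : n j = 1) :
    ∃ m : Fin (r - 1) → ℕ, Nonempty ((∀ i, ZMod (n i)) ≃+ ∀ i, ZMod (m i)) := by
  cases r with
  | zero => exact j.elim0
  | succ k =>
    obtain ⟨ψ⟩ := dropTriv n j hj
    exact ⟨fun i => n (j.succAbove i), ⟨ψ⟩⟩

/-- The rank is attained by a decomposition into nontrivial cyclic groups. -/
lemma addRank_spec (A : Type*) [AddCommGroup A] [Fintype A] :
    ∃ n : Fin (addRank A) → ℕ, (∀ i, n i ≠ 1) ∧ Nonempty (A ≃+ ∀ i, ZMod (n i)) := by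
  classical
  have hne : {r : ℕ | ∃ n : Fin r → ℕ, Nonempty (A ≃+ ∀ i, ZMod (n i))}.Nonempty := by
    obtain ⟨ι, hι, n, hn, ⟨e⟩⟩ := AddCommGroup.equiv_directSum_zmod_of_finite' A
    let eq : ι ≃ Fin (Fintype.card ι) := Fintype.equivFin ι
    refine ⟨Fintype.card ι, fun i => n (eq.symm i), ⟨(e.trans
      (DirectSum.addEquivProd (fun i => ZMod (n i)))).trans
      (AddEquiv.mk' (Equiv.piCongrLeft' (fun i => ZMod (n i)) eq) (fun x y => rfl))⟩⟩
  have hmem := Nat.sInf_mem hne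
  obtain ⟨n, ⟨φ⟩⟩ := hmem
  refine ⟨n, fun j hj => ?_, ⟨φ⟩⟩
  -- if some `n j = 1`, we can drop that factor, contradicting minimality
  have hr : 0 < addRank A := j.pos
  obtain ⟨m, ⟨ψ⟩⟩ := shrink n j hj
  have e : A ≃+ ∀ i, ZMod (m i) := φ.trans ψ
  have hle : addRank A ≤ addRank A - 1 :=
    Nat.sInf_le ⟨m, ⟨e⟩⟩
  omega

end Aux

/-- For a nonzero commutative ring `R` and a nontrivial finite commutative group `A`, the
nilpotency index of the augmentation ideal of `R[A]` is at least
`max (exp A) (rank A)`; in particular `([a]-[0])^(ord(a)-1) ≠ 0`. -/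
theorem augIdeal_nilpotency_index_lower_bound (R : Type*) [CommRing R] [Nontrivial R]
    (A : Type*) [AddCommGroup A] [Fintype A] [Nontrivial A] :
    (∀ n : ℕ, augIdeal R A ^ n = ⊥ → max (AddMonoid.exponent A) (addRank A) ≤ n) ∧
      ∀ a : A, (AddMonoidAlgebra.single a (1 : R)
          - AddMonoidAlgebra.single (0 : A) (1 : R)) ^ (addOrderOf a - 1) ≠ 0 := by
  classical
  have hone : (AddMonoidAlgebra.single (0 : A) (1 : R)) = 1 := AddMonoidAlgebra.one_def.symm
  constructor
  · intro nn hnn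
    refine max_le ?_ ?_
    · -- exponent bound
      by_contra hlt
      push_neg at hlt
      obtain ⟨a, ha⟩ :=
        AddMonoid.exists_addOrderOf_eq_exponent (AddMonoid.ExponentExists.of_finite (G := A))
      have hnz : (AddMonoidAlgebra.single a (1 : R) - 1) ^ (AddMonoid.exponent A - 1) ≠ 0 := by
        rw [← ha]; exact pow_sub_one_ne_zero a
      have hmem : (AddMonoidAlgebra.single a (1 : R) - 1) ^ (AddMonoid.exponent A - 1)
          ∈ augIdeal R A ^ (AddMonoid.exponent A - 1) :=
        Ideal.pow_mem_pow (sub_one_mem_augIdeal a) _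
      have hle : augIdeal R A ^ (AddMonoid.exponent A - 1) ≤ augIdeal R A ^ nn :=
        Ideal.pow_le_pow_right (by omega)
      rw [hnn] at hle
      exact hnz (Ideal.mem_bot.mp (hle hmem))
    · -- rank bound
      by_contra hlt
      push_neg at hlt
      obtain ⟨n, hn1, ⟨φ⟩⟩ := addRank_spec A
      let a : Fin (addRank A) → A := fun i => φ.symm (Pi.single i 1)
      have hsum : ∀ t : Finset (Fin (addRank A)), t.Nonempty → ∑ i ∈ t, a i ≠ 0 := by
        rintro t ⟨j, hj⟩ hc
        have h0 : φ (∑ i ∈ t, a i) = 0 := by rw [hc, map_zero]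
        rw [map_sum] at h0
        simp only [a, AddEquiv.apply_symm_apply] at h0
        have h1 := congrFun h0 j
        rw [Finset.sum_apply] at h1
        simp only [Finset.sum_pi_single, hj, if_pos] at h1
        haveI : Nontrivial (ZMod (n j)) := ZMod.nontrivial_iff.mpr (hn1 j)
        exact one_ne_zero h1
      have hcoeff := coeff_prod (R := R) a hsum
      have hmem : (∏ i : Fin (addRank A), (AddMonoidAlgebra.single (a i) (1 : R) - 1))
          ∈ augIdeal R A ^ addRank A := by
        have hpr : augIdeal R A ^ addRank A = ∏ _i : Fin (addRank A), augIdeal R A := by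
          rw [Finset.prod_const, Finset.card_univ, Fintype.card_fin]
        rw [hpr]
        exact Ideal.prod_mem_prod (fun i _ => sub_one_mem_augIdeal (a i))
      have hle : augIdeal R A ^ addRank A ≤ augIdeal R A ^ nn :=
        Ideal.pow_le_pow_right (by omega)
      rw [hnn] at hle
      have hz : (∏ i : Fin (addRank A), (AddMonoidAlgebra.single (a i) (1 : R) - 1)) = 0 :=
        Ideal.mem_bot.mp (hle hmem)
      rw [hz] at hcoeff
      simp only [AddMonoidAlgebra.coeff_zero, Finsupp.coe_zero, Pi.zero_apply] at hcoeff
      exact IsUnit.ne_zero (isUnit_one.neg.pow _) hcoeff.symm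
  · intro a
    rw [hone]
    exact pow_sub_one_ne_zero a
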